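/- arXiv:1907.05605 — 4 statements merged into one kernel-verified Lean document; each statement's English description precedes it below -/
import Mathlib

section
/- Let S be a nonempty finite set, let μ be a probability measure on F_S, and let F = (F_s : s ∈ ℕ) be an i.i.d. sequence with law μ. Then the coalescence number k(F) is almost surely constant: there exists an integer k* such that μ̄(k(F) = k*) = 1, where μ̄ is the product measure giving the joint law of F. -/
open MeasureTheory

namespace CFTP

variable {S : Type*}

/-- Forward composition `f_t ∘ f_{t-1} ∘ ⋯ ∘ f_1` (functions are indexed by 1,2,…). -/
def fwd (f : ℕ → S → S) : ℕ → S → S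
  | 0 => id
  | t + 1 => f (t + 1) ∘ fwd f t

/-- Backward composition `f_1 ∘ f_2 ∘ ⋯ ∘ f_t`. -/
def bwd (f : ℕ → S → S) : ℕ → S → S
  | 0 => id
  | t + 1 => bwd f t ∘ f (t + 1)

/-- `k_t(f⃗)`: the number of equivalence classes of `i ~ j ↔ f⃗_t i = f⃗_t j`,
i.e. the cardinality of the image of the forward composition. -/
noncomputable def ktF (f : ℕ → S → S) (t : ℕ) : ℕ := Set.ncard (Set.range (fwd f t))

/-- `k_t(f⃖)`: the cardinality of the image of the backward composition. -/
noncomputable def ktB (f : ℕ → S → S) (t : ℕ) : ℕ := Set.ncard (Set.range (bwd f t))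

/-- `k(f⃗)`: the eventual (= minimal) value of the non-increasing sequence `k_t(f⃗)`. -/
noncomputable def kF (f : ℕ → S → S) : ℕ := ⨅ t, ktF f t

/-- `k(f⃖)`. -/
noncomputable def kB (f : ℕ → S → S) : ℕ := ⨅ t, ktB f t

/-- `μbar` is the joint law of an i.i.d. sequence with one-step law `ν`,
i.e. the countable product measure `∏_{s ∈ ℕ} ν`, characterised by its
values on cylinder events. -/
def IsIID [MeasurableSpace S] (ν : Measure (S → S)) (μbar : Measure (ℕ → S → S)) : Prop :=
  ∀ (I : Finset ℕ) (g : ℕ → S → S),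
    μbar {F | ∀ s ∈ I, F s = g s} = ∏ s ∈ I, ν {g s}

/-- The support of a probability measure on the finite set `F_S`. -/
def supp [MeasurableSpace S] (ν : Measure (S → S)) : Set (S → S) := {f | 0 < ν {f}}

/-- A stochastic matrix: nonnegative entries, row sums one. -/
def IsStochastic [Fintype S] (P : S → S → ℝ) : Prop :=
  (∀ i j, 0 ≤ P i j) ∧ ∀ i, ∑ j, P i j = 1

/-- `ν ∈ L(P)`: the measure `ν` on `F_S` is consistent with the matrix `P`. -/
def Consistent [Fintype S] [MeasurableSpace S] (P : S → S → ℝ) (ν : Measure (S → S)) : Prop :=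
  ∀ i j, ν {f : S → S | f i = j} = ENNReal.ofReal (P i j)

/-- Irreducibility: for all `i j` some power of `P` has positive `(i,j)` entry. -/
def Irred [Fintype S] [DecidableEq S] (P : S → S → ℝ) : Prop :=
  ∀ i j, ∃ t, 1 ≤ t ∧ 0 < ((Matrix.of P) ^ t) i j

/-- Aperiodicity: for each `i`, the gcd of `{t ≥ 1 : (P^t)_{i,i} > 0}` is `1`,
expressed as: every common divisor of that set equals `1`. -/
def Aperiodic [Fintype S] [DecidableEq S] (P : S → S → ℝ) : Prop :=
  ∀ i, ∀ d : ℕ, (∀ t, 1 ≤ t → 0 < ((Matrix.of P) ^ t) i i → d ∣ t) → d = 1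

/-- A function is constant. -/
def IsConst (g : S → S) : Prop := ∀ i j, g i = g j

/-- The backward coalescence time `C`. -/
noncomputable def Ctime (F : ℕ → S → S) : ℕ∞ :=
  sInf ((fun t : ℕ => (t : ℕ∞)) '' {t : ℕ | 1 ≤ t ∧ IsConst (bwd F t)})

/-- The forward coalescence time `T`. -/
noncomputable def Ttime (F : ℕ → S → S) : ℕ∞ :=
  sInf ((fun t : ℕ => (t : ℕ∞)) '' {t : ℕ | 1 ≤ t ∧ IsConst (fwd F t)})

/-- The 0-1 matrix `M_f`. -/
noncomputable def Mmat [Fintype S] [DecidableEq S] (f : S → S) : Matrix S S ℝ :=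
  Matrix.of fun i j => if f i = j then 1 else 0

/-- The product `M_{f_t} M_{f_{t-1}} ⋯ M_{f_1}`. -/
noncomputable def Mprod [Fintype S] [DecidableEq S] (f : ℕ → S → S) : ℕ → Matrix S S ℝ
  | 0 => 1
  | t + 1 => Mmat (f (t + 1)) * Mprod f t

/-- The event that states `i` and `j` coalesce. -/
def coalEvent (i j : S) : Set (ℕ → S → S) := {F | ∃ t, 1 ≤ t ∧ fwd F t i = fwd F t j}

set_option linter.unusedSectionVars false

section Aux
variable [Fintype S] [Nonempty S] [MeasurableSpace S] [DiscreteMeasurableSpace S]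


lemma fwd_congr (f g : ℕ → S → S) (t : ℕ) (h : ∀ s, 1 ≤ s → s ≤ t → f s = g s) :
    fwd f t = fwd g t := by
  induction t with
  | zero => rfl
  | succ t ih =>
    show f (t+1) ∘ fwd f t = g (t+1) ∘ fwd g t
    rw [h (t+1) (by omega) le_rfl, ih fun s h1 h2 => h s h1 (by omega)]

lemma fwd_add (f : ℕ → S → S) (n t : ℕ) :
    fwd f (n + t) = fwd (fun s => f (n + s)) t ∘ fwd f n := by
  induction t with
  | zero => rfl
  | succ t ih =>
    show f (n + t + 1) ∘ fwd f (n + t) = (fun s => f (n + s)) (t+1) ∘ fwd (fun s => f (n+s)) t ∘ fwd f n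
    rw [ih]; rfl

lemma ktF_antitone [Finite S] (f : ℕ → S → S) : Antitone (ktF f) := by
  apply antitone_nat_of_succ_le
  intro t
  have : Set.range (fwd f (t+1)) = f (t+1) '' Set.range (fwd f t) := by
    show Set.range (f (t+1) ∘ fwd f t) = _
    rw [Set.range_comp]
  rw [ktF, this]
  exact Set.ncard_image_le (Set.toFinite _)

lemma kF_le (f : ℕ → S → S) (t : ℕ) : kF f ≤ ktF f t := ciInf_le (OrderBot.bddBelow _) t

section Measure
variable [Fintype S] [Nonempty S] [MeasurableSpace S] [DiscreteMeasurableSpace S]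

def cyl (J : Finset ℕ) (g : ℕ → S → S) : Set (ℕ → S → S) := {F | ∀ s ∈ J, F s = g s}

lemma measurableSet_cyl (J : Finset ℕ) (g : ℕ → S → S) : MeasurableSet (cyl J g) := by
  have : cyl J g = ⋂ s ∈ J, (fun F : ℕ → S → S => F s) ⁻¹' {g s} := by
    ext F; simp [cyl]
  rw [this]
  exact MeasurableSet.biInter J.countable_toSet fun s _ =>
    (measurable_pi_apply s) (MeasurableSet.singleton _)

lemma cyl_inter (J K : Finset ℕ) (h : Disjoint J K) (a g : ℕ → S → S) :
    cyl J a ∩ cyl K g = cyl (J ∪ K) (fun s => if s ∈ J then a s else g s) := by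
  classical
  ext F
  simp only [cyl, Set.mem_inter_iff, Set.mem_setOf_eq, Finset.mem_union]
  constructor
  · rintro ⟨h1, h2⟩ s hs
    by_cases hsJ : s ∈ J
    · simp [hsJ, h1 s hsJ]
    · rcases hs with hs | hs
      · exact absurd hs hsJ
      · simp [hsJ, h2 s hs]
  · intro hF
    refine ⟨fun s hs => ?_, fun s hs => ?_⟩
    · have := hF s (Or.inl hs); simpa [hs] using this
    · have hsJ : s ∉ J := fun hsJ => (Finset.disjoint_left.mp h hsJ) hs
      have := hF s (Or.inr hs); simpa [hsJ] using this

lemma measure_inter_cyl (ν : Measure (S → S)) (μbar : Measure (ℕ → S → S))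
    (hiid : IsIID ν μbar) (J K : Finset ℕ) (hd : Disjoint J K)
    (B : Set (ℕ → S → S))
    (hB : ∀ F F' : ℕ → S → S, (∀ s ∈ J, F s = F' s) → F ∈ B → F' ∈ B)
    (g : ℕ → S → S) :
    μbar (B ∩ cyl K g) = μbar B * ∏ s ∈ K, ν {g s} := by
  classical
  set r : (ℕ → S → S) → (J → (S → S)) := fun F s => F s.1 with hr
  set ex : (J → (S → S)) → (ℕ → S → S) := fun w s => if h : s ∈ J then w ⟨s, h⟩ else id with hex
  have hagree : ∀ F : ℕ → S → S, ∀ s ∈ J, F s = ex (r F) s := by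
    intro F s hs; simp [hex, hr, hs]
  have key : ∀ F, F ∈ B ↔ ex (r F) ∈ B := fun F =>
    ⟨hB F _ (hagree F), fun h => hB _ F (fun s hs => (hagree F s hs).symm) h⟩
  have hpre : ∀ w : J → (S → S), r ⁻¹' {w} = cyl J (ex w) := by
    intro w
    ext F
    simp only [Set.mem_preimage, Set.mem_singleton_iff, cyl, Set.mem_setOf_eq, funext_iff]
    constructor
    · intro h s hs; have := h ⟨s, hs⟩; simp [hex, hs]; exact this
    · intro h s; have := h s.1 s.2; simpa [hex, s.2, hr] using this
  set T : Finset (J → (S → S)) := Finset.univ.filter (fun w => ex w ∈ B) with hT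
  have hBU : B = ⋃ w ∈ T, r ⁻¹' {w} := by
    ext F
    simp only [Set.mem_iUnion, Set.mem_preimage, Set.mem_singleton_iff, hT,
      Finset.mem_filter, Finset.mem_univ, true_and, exists_prop]
    constructor
    · intro hF; exact ⟨r F, (key F).mp hF, rfl⟩
    · rintro ⟨w, hw, rfl⟩; exact (key F).mpr hw
  have hdisj : (↑T : Set (J → (S → S))).PairwiseDisjoint
      (fun w => r ⁻¹' {w} ∩ cyl K g) := by
    intro w _ w' _ hne
    refine Set.disjoint_left.mpr fun F hF hF' => hne ?_
    have h1 : r F = w := hF.1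
    have h2 : r F = w' := hF'.1
    rw [← h1, h2]
  have hdisj' : (↑T : Set (J → (S → S))).PairwiseDisjoint (fun w => r ⁻¹' {w}) := by
    intro w _ w' _ hne
    refine Set.disjoint_left.mpr fun F hF hF' => hne ?_
    rw [← Set.mem_singleton_iff.mp hF, Set.mem_singleton_iff.mp hF']
  have hmeas : ∀ w : J → (S → S), MeasurableSet (r ⁻¹' {w}) := by
    intro w; rw [hpre]; exact measurableSet_cyl _ _
  have hterm : ∀ w : J → (S → S),
      μbar (r ⁻¹' {w} ∩ cyl K g) = μbar (r ⁻¹' {w}) * ∏ s ∈ K, ν {g s} := by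
    intro w
    rw [hpre, cyl_inter J K hd]
    have h1 : μbar (cyl (J ∪ K) fun s => if s ∈ J then ex w s else g s)
        = ∏ s ∈ J ∪ K, ν {if s ∈ J then ex w s else g s} := hiid _ _
    have h2 : μbar (cyl J (ex w)) = ∏ s ∈ J, ν {ex w s} := hiid _ _
    rw [h1, h2, Finset.prod_union hd]
    congr 1
    · exact Finset.prod_congr rfl fun s hs => by simp [hs]
    · refine Finset.prod_congr rfl fun s hs => ?_
      have : s ∉ J := fun h => (Finset.disjoint_left.mp hd h) hs
      simp [this]
  calc μbar (B ∩ cyl K g) = μbar (⋃ w ∈ T, (r ⁻¹' {w} ∩ cyl K g)) := by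
        rw [hBU, Set.iUnion₂_inter]
    _ = ∑ w ∈ T, μbar (r ⁻¹' {w} ∩ cyl K g) :=
        measure_biUnion_finset hdisj fun w _ => (hmeas w).inter (measurableSet_cyl _ _)
    _ = ∑ w ∈ T, μbar (r ⁻¹' {w}) * ∏ s ∈ K, ν {g s} := by
        exact Finset.sum_congr rfl fun w _ => hterm w
    _ = (∑ w ∈ T, μbar (r ⁻¹' {w})) * ∏ s ∈ K, ν {g s} := by rw [Finset.sum_mul]
    _ = μbar B * ∏ s ∈ K, ν {g s} := by
        rw [hBU, measure_biUnion_finset hdisj' fun w _ => hmeas w]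

end Measure
end Aux

-- STATEMENT 3
theorem stmt3 [Fintype S] [Nonempty S] [MeasurableSpace S] [DiscreteMeasurableSpace S]
    (ν : Measure (S → S)) [IsProbabilityMeasure ν]
    (μbar : Measure (ℕ → S → S)) [IsProbabilityMeasure μbar]
    (hiid : IsIID ν μbar) :
    ∃ kstar : ℕ, μbar {F | kF F = kstar} = 1 := by
  classical
  -- the candidate value
  set KS : Set ℕ := {m | ∃ t, ∃ f : ℕ → S → S,
      (∀ s, 1 ≤ s → s ≤ t → ν {f s} ≠ 0) ∧ ktF f t = m} with hKS
  have hKSne : KS.Nonempty := ⟨ktF (fun _ => id) 0, 0, fun _ => id, fun s h1 h2 => by omega, rfl⟩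
  set kstar := sInf KS with hkstar
  obtain ⟨t₀, g, hg, hkg⟩ : kstar ∈ KS := Nat.sInf_mem hKSne
  refine ⟨kstar, ?_⟩
  -- block-match events
  set A : ℕ → Set (ℕ → S → S) := fun n =>
    cyl (Finset.Icc (n * t₀ + 1) (n * t₀ + t₀)) (fun s => g (s - n * t₀)) with hA
  have hAmem : ∀ n F, F ∈ A n ↔ ∀ s, 1 ≤ s → s ≤ t₀ → F (n * t₀ + s) = g s := by
    intro n F
    constructor
    · intro h s h1 h2
      have := h (n * t₀ + s) (by simp [Finset.mem_Icc]; omega)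
      simpa using this
    · intro h s hs
      simp only [Finset.mem_Icc] at hs
      have := h (s - n * t₀) (by omega) (by omega)
      have heq : n * t₀ + (s - n * t₀) = s := by omega
      rw [heq] at this
      exact this
  -- the good events
  set H1 : Set (ℕ → S → S) := {F | ∀ s, 1 ≤ s → ν {F s} ≠ 0} with hH1
  set H2 : Set (ℕ → S → S) := ⋃ n, A n with hH2
  -- on H1 ∩ H2, kF = kstar
  have hsub : H1 ∩ H2 ⊆ {F | kF F = kstar} := by
    rintro F ⟨hF1, hF2⟩
    have hge : kstar ≤ kF F := by
      refine le_ciInf fun t => Nat.sInf_le ⟨t, F, fun s h1 _ => hF1 s h1, rfl⟩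
    have hle : kF F ≤ kstar := by
      obtain ⟨n, hn⟩ := Set.mem_iUnion.mp hF2
      rw [hAmem] at hn
      have hcomp : Set.range (fwd F (n * t₀ + t₀)) ⊆ Set.range (fwd g t₀) := by
        rw [fwd_add]
        have : fwd (fun s => F (n * t₀ + s)) t₀ = fwd g t₀ :=
          fwd_congr _ _ _ fun s h1 h2 => hn s h1 h2
        rw [this, Set.range_comp]
        exact Set.image_subset_range _ _
      calc kF F ≤ ktF F (n * t₀ + t₀) := kF_le F _
        _ ≤ ktF g t₀ := Set.ncard_le_ncard hcomp (Set.toFinite _)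
        _ = kstar := hkg
    exact le_antisymm hle hge
  -- μbar H1ᶜ = 0
  have hH1null : μbar H1ᶜ = 0 := by
    have hsub1 : H1ᶜ ⊆ ⋃ (s : ℕ), ⋃ (f : S → S) (_ : ν {f} = 0), cyl {s} (fun _ => f) := by
      intro F hF
      simp only [hH1, Set.mem_compl_iff, Set.mem_setOf_eq, not_forall] at hF
      obtain ⟨s, _, hs2⟩ := hF
      rw [not_ne_iff] at hs2
      refine Set.mem_iUnion.mpr ⟨s, Set.mem_iUnion.mpr ⟨F s, Set.mem_iUnion.mpr ⟨hs2, ?_⟩⟩⟩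
      intro s' hs'
      simp only [Finset.mem_singleton] at hs'
      subst hs'; rfl
    refine measure_mono_null hsub1 ?_
    refine measure_iUnion_null fun s => measure_iUnion_null fun f => measure_iUnion_null fun hf => ?_
    have := hiid {s} (fun _ => f)
    simp only [Finset.prod_singleton] at this
    calc μbar (cyl {s} fun _ => f) = ν {f} := this
      _ = 0 := hf
  -- the probability of one block
  set p : ENNReal := ∏ s ∈ Finset.Icc 1 t₀, ν {g s} with hp
  have hp0 : p ≠ 0 := by
    rw [hp, Finset.prod_ne_zero_iff]
    intro s hs
    simp only [Finset.mem_Icc] at hs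
    exact hg s hs.1 hs.2
  have hpblock : ∀ n, ∏ s ∈ Finset.Icc (n * t₀ + 1) (n * t₀ + t₀), ν {g (s - n * t₀)} = p := by
    intro n
    rw [hp, show Finset.Icc (n * t₀ + 1) (n * t₀ + t₀)
        = Finset.map (addLeftEmbedding (n * t₀)) (Finset.Icc 1 t₀) from by
      rw [Finset.map_add_left_Icc], Finset.prod_map]
    refine Finset.prod_congr rfl fun s _ => ?_
    simp [addLeftEmbedding]
  -- the iterated bound
  set E : ℕ → Set (ℕ → S → S) := fun N => ⋂ n ∈ Finset.range N, (A n)ᶜ with hE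
  have hEmeas : ∀ N, MeasurableSet (E N) :=
    fun N => MeasurableSet.biInter (Finset.range N).countable_toSet
      fun n _ => (measurableSet_cyl _ _).compl
  have hEbound : ∀ N, μbar (E N) ≤ (1 - p) ^ N := by
    intro N
    induction N with
    | zero => simpa [hE] using prob_le_one
    | succ N ih =>
      have hEsucc : E (N + 1) = E N ∩ (A N)ᶜ := by
        ext F
        simp only [hE, Set.mem_iInter, Set.mem_inter_iff, Set.mem_compl_iff, Finset.mem_range]
        constructor
        · intro h; exact ⟨fun n hn => h n (by omega), h N (by omega)⟩
        · rintro ⟨h1, h2⟩ n hn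
          rcases Nat.lt_succ_iff_lt_or_eq.mp hn with h | rfl
          · exact h1 n h
          · exact h2
      have hindep : μbar (E N ∩ A N) = μbar (E N) * p := by
        rw [hA]
        have := measure_inter_cyl ν μbar hiid (Finset.Icc 1 (N * t₀))
          (Finset.Icc (N * t₀ + 1) (N * t₀ + t₀))
          (by simp only [Finset.disjoint_left, Finset.mem_Icc]; omega)
          (E N) ?_ (fun s => g (s - N * t₀))
        · rw [this, hpblock]
        · -- E N depends only on coords in Icc 1 (N*t₀)
          intro F F' hag hF
          simp only [hE, Set.mem_iInter, Set.mem_compl_iff] at hF ⊢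
          intro n hn hA'
          refine hF n hn ?_
          rw [hAmem] at hA' ⊢
          intro s h1 h2
          rw [hag (n * t₀ + s) ?_]
          · exact hA' s h1 h2
          · simp only [Finset.mem_Icc]
            have hnN : n + 1 ≤ N := Finset.mem_range.mp hn
            constructor
            · omega
            · calc n * t₀ + s ≤ n * t₀ + t₀ := by omega
                _ = (n + 1) * t₀ := by ring
                _ ≤ N * t₀ := Nat.mul_le_mul_right _ hnN
      have hdiff : μbar (E (N + 1)) = μbar (E N) - μbar (E N ∩ A N) := by
        rw [hEsucc]
        have : E N ∩ (A N)ᶜ = E N \ (E N ∩ A N) := by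
          ext F; simp only [Set.mem_inter_iff, Set.mem_compl_iff, Set.mem_diff]; tauto
        rw [this, measure_diff Set.inter_subset_left
          (((hEmeas N).inter (measurableSet_cyl _ _)).nullMeasurableSet)
          (measure_ne_top μbar _)]
      rw [hdiff, hindep]
      have : μbar (E N) - μbar (E N) * p = μbar (E N) * (1 - p) := by
        rw [ENNReal.mul_sub (fun _ _ => measure_ne_top μbar _), mul_one]
      rw [this, pow_succ]
      exact mul_le_mul' ih le_rfl
  -- μbar H2ᶜ = 0
  have hH2null : μbar H2ᶜ = 0 := by
    have hsub2 : ∀ N, H2ᶜ ⊆ E N := by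
      intro N F hF
      simp only [hH2, Set.mem_compl_iff, Set.mem_iUnion, not_exists] at hF
      exact Set.mem_iInter.mpr fun n => Set.mem_iInter.mpr fun _ => hF n
    have hbound : ∀ N, μbar H2ᶜ ≤ (1 - p) ^ N :=
      fun N => le_trans (measure_mono (hsub2 N)) (hEbound N)
    have h1p : (1 : ENNReal) - p < 1 := ENNReal.sub_lt_self ENNReal.one_ne_top one_ne_zero hp0
    have := ge_of_tendsto' (ENNReal.tendsto_pow_atTop_nhds_zero_of_lt_one h1p) hbound
    exact le_antisymm this zero_le
  -- assemble
  have hcnull : μbar {F | kF F = kstar}ᶜ = 0 := by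
    refine measure_mono_null ?_ (measure_union_null hH1null hH2null)
    intro F hF
    by_contra hcon
    simp only [Set.mem_union, Set.mem_compl_iff, not_or, not_not] at hcon
    exact hF (hsub ⟨hcon.1, hcon.2⟩)
  have h1 : (1 : ENNReal) = μbar Set.univ := (measure_univ).symm
  have : (1 : ENNReal) ≤ μbar {F | kF F = kstar} := by
    rw [h1, ← Set.union_compl_self {F | kF F = kstar}]
    calc μbar ({F | kF F = kstar} ∪ {F | kF F = kstar}ᶜ)
        ≤ μbar {F | kF F = kstar} + μbar {F | kF F = kstar}ᶜ := measure_union_le _ _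
      _ = μbar {F | kF F = kstar} := by rw [hcnull, add_zero]
  exact le_antisymm prob_le_one this

end CFTP
end

section
/- Let S be a nonempty finite set and let μ_1, μ_2 be probability measures on F_S. If supp(μ_1) ⊆ supp(μ_2), then k(μ_1) ≥ k(μ_2). -/
open MeasureTheory

namespace CFTP

variable {S : Type*}

lemma fwd_eq_of_agree (f g : ℕ → S → S) :
    ∀ T, (∀ s, 1 ≤ s → s ≤ T → f s = g s) → fwd f T = fwd g T
  | 0, _ => rfl
  | T + 1, h => by
    have ih := fwd_eq_of_agree f g T (fun s h1 h2 => h s h1 (Nat.le_succ_of_le h2))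
    simp only [fwd, ih, h (T + 1) (Nat.succ_le_succ (Nat.zero_le _)) le_rfl]

-- STATEMENT 4
theorem stmt4 [Fintype S] [Nonempty S] [MeasurableSpace S] [DiscreteMeasurableSpace S]
    (ν₁ ν₂ : Measure (S → S)) [IsProbabilityMeasure ν₁] [IsProbabilityMeasure ν₂]
    (μbar₁ μbar₂ : Measure (ℕ → S → S))
    [IsProbabilityMeasure μbar₁] [IsProbabilityMeasure μbar₂]
    (h₁ : IsIID ν₁ μbar₁) (h₂ : IsIID ν₂ μbar₂)
    (k₁ k₂ : ℕ)
    (hk₁ : μbar₁ {F | kF F = k₁} = 1) (hk₂ : μbar₂ {F | kF F = k₂} = 1)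
    (hsupp : supp ν₁ ⊆ supp ν₂) :
    k₂ ≤ k₁ := by
  classical
  have hcyl : ∀ (s : ℕ) (g : S → S), MeasurableSet {F : ℕ → S → S | F s = g} :=
    fun s g => by
      have : {F : ℕ → S → S | F s = g} = (fun F : ℕ → S → S => F s) ⁻¹' {g} := by
        ext F; simp
      rw [this]
      exact (measurable_pi_apply s) (measurableSet_singleton g)
  -- single-coordinate cylinder measures
  have hone : ∀ (μbar : Measure (ℕ → S → S)) (ν : Measure (S → S)), IsIID ν μbar →
      ∀ (s : ℕ) (g : S → S), μbar {F | F s = g} = ν {g} := by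
    intro μbar ν h s g
    have := h {s} (fun _ => g)
    simpa using this
  -- the set of sequences with a coordinate outside supp ν₁ is μbar₁-null
  set Bad : Set (ℕ → S → S) := ⋃ s : ℕ, {F : ℕ → S → S | ν₁ {F s} = 0} with hBadDef
  have hBad : μbar₁ Bad = 0 := by
    refine measure_iUnion_null fun s => ?_
    have hEq : {F : ℕ → S → S | ν₁ {F s} = 0}
        = ⋃ g ∈ {g : S → S | ν₁ {g} = 0}, {F : ℕ → S → S | F s = g} := by
      ext F; simp
    rw [hEq]
    refine measure_iUnion_null fun g => measure_iUnion_null fun hg => ?_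
    rw [hone μbar₁ ν₁ h₁ s g]; exact hg
  -- find f with kF f = k₁ and all coordinates in supp ν₁
  have hne : ({F : ℕ → S → S | kF F = k₁} ∩ Badᶜ).Nonempty := by
    rw [Set.nonempty_iff_ne_empty]
    intro hempty
    have hsub : {F : ℕ → S → S | kF F = k₁} ⊆ Bad := by
      intro F hF
      by_contra hB
      exact absurd (Set.mem_inter hF hB) (by rw [hempty]; exact Set.notMem_empty F)
    have := measure_mono (μ := μbar₁) hsub
    rw [hk₁, hBad] at this
    simp at this
  obtain ⟨f, hf1, hf2⟩ := hne
  have hfsupp : ∀ s : ℕ, 0 < ν₂ {f s} := by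
    intro s
    have h1 : ν₁ {f s} ≠ 0 := by
      intro h0
      exact hf2 (Set.mem_iUnion.2 ⟨s, h0⟩)
    exact hsupp (pos_iff_ne_zero.mpr h1)
  -- the infimum kF f is attained at some T
  obtain ⟨T, hT⟩ := Nat.sInf_mem (Set.range_nonempty (ktF f))
  have hkfT : ktF f T = kF f := hT
  -- cylinder around the first T coordinates of f
  set C : Set (ℕ → S → S) := {G | ∀ s ∈ Finset.Icc 1 T, G s = f s} with hCdef
  have hCmeas : MeasurableSet C := by
    have : C = ⋂ s ∈ (Finset.Icc 1 T : Finset ℕ), {G : ℕ → S → S | G s = f s} := by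
      ext G; simp [hCdef]
    rw [this]
    exact MeasurableSet.biInter (Set.to_countable _) fun s _ => hcyl s (f s)
  have hCpos : 0 < μbar₂ C := by
    have := h₂ (Finset.Icc 1 T) f
    rw [hCdef, this]
    rw [pos_iff_ne_zero]
    rw [Finset.prod_ne_zero_iff]
    exact fun s _ => (hfsupp s).ne'
  -- C meets the full-measure set {kF = k₂}
  have hne2 : (C ∩ {G : ℕ → S → S | kF G = k₂}).Nonempty := by
    rw [Set.nonempty_iff_ne_empty]
    intro hempty
    have hsub : {G : ℕ → S → S | kF G = k₂} ⊆ Cᶜ := by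
      intro G hG
      intro hGC
      exact absurd (Set.mem_inter hGC hG) (by rw [hempty]; exact Set.notMem_empty G)
    have h1 : (1 : ENNReal) ≤ μbar₂ Cᶜ := by
      rw [← hk₂]; exact measure_mono hsub
    have h2 : μbar₂ Cᶜ = 1 - μbar₂ C := prob_compl_eq_one_sub hCmeas
    rw [h2] at h1
    have : (1 : ENNReal) - μbar₂ C < 1 :=
      ENNReal.sub_lt_self ENNReal.one_ne_top one_ne_zero hCpos.ne'
    exact absurd (lt_of_le_of_lt h1 this) (lt_irrefl _)
  obtain ⟨G, hG1, hG2⟩ := hne2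
  -- G agrees with f on 1..T, so ktF G T = ktF f T
  have hagree : fwd G T = fwd f T := by
    refine fwd_eq_of_agree G f T fun s h1 h2 => ?_
    exact hG1 s (Finset.mem_Icc.2 ⟨h1, h2⟩)
  have hkt : ktF G T = ktF f T := by
    unfold ktF; rw [hagree]
  have hle : kF G ≤ ktF G T := Nat.sInf_le ⟨T, rfl⟩
  calc k₂ = kF G := hG2.symm
    _ ≤ ktF G T := hle
    _ = ktF f T := hkt
    _ = kF f := hkfT
    _ = k₁ := hf1

end CFTP
end

section
/- Let S be a finite set with |S| = n ≥ 2 and let k satisfy 1 ≤ k ≤ n. Then there exists an irreducible aperiodic stochastic matrix P on S such that k ∈ K(P), i.e. there exists a probability measure μ consistent with P with coalescence number k(μ) = k. -/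
set_option linter.unusedSectionVars false
set_option linter.unusedVariables false
set_option maxHeartbeats 1000000


open MeasureTheory

namespace CFTP

variable {S : Type*}

open scoped ENNReal

section Det
variable {S : Type*} [Fintype S] [DecidableEq S]

def bIdx {n : ℕ} (k : ℕ) (e : S ≃ Fin n) (i : S) : ℕ := min (e i).val (k - 1)

def iotaF {n : ℕ} (k : ℕ) (e : S ≃ Fin n) (hn0 : 0 < n) (a j : ℕ) : S :=
  e.symm ⟨(if j < k - 1 then j else k - 1 + a) % n, Nat.mod_lt _ hn0⟩

def fmapF {n : ℕ} (k : ℕ) (e : S ≃ Fin n) (hn0 : 0 < n) (a r : ℕ) : S → S :=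
  fun i => iotaF k e hn0 a ((bIdx k e i + r) % k)

variable {n k : ℕ} {e : S ≃ Fin n}

lemma e_iotaF {hn0 : 0 < n} {a j : ℕ} (ha : a ≤ n - k) (hj : j < k) (hk2 : k ≤ n) :
    (e (iotaF k e hn0 a j)).val = if j < k - 1 then j else k - 1 + a := by
  have hlt : (if j < k - 1 then j else k - 1 + a) < n := by split <;> omega
  unfold iotaF
  rw [Equiv.apply_symm_apply]
  exact Nat.mod_eq_of_lt hlt

lemma bIdx_iotaF {hn0 : 0 < n} {a j : ℕ} (ha : a ≤ n - k) (hj : j < k) (hk2 : k ≤ n) :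
    bIdx k e (iotaF k e hn0 a j) = j := by
  unfold bIdx
  rw [e_iotaF ha hj hk2]
  split <;> omega

def TSet {n : ℕ} (k : ℕ) (e : S ≃ Fin n) (hn0 : 0 < n) (a : ℕ) : Set S :=
  iotaF k e hn0 a '' Set.Iio k

def GoodSet {n : ℕ} (k : ℕ) (e : S ≃ Fin n) (A : Set S) : Prop :=
  ∀ v, v < k → ∃ x ∈ A, bIdx k e x = v

lemma goodSet_univ (hn0 : 0 < n) (hk2 : k ≤ n) : GoodSet k e (Set.univ : Set S) := fun v hv =>
  ⟨iotaF k e hn0 0 v, trivial, bIdx_iotaF (by omega) hv hk2⟩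

lemma goodSet_TSet {hn0 : 0 < n} {a : ℕ} (ha : a ≤ n - k) (hk2 : k ≤ n) :
    GoodSet k e (TSet k e hn0 a) := fun v hv =>
  ⟨iotaF k e hn0 a v, ⟨v, hv, rfl⟩, bIdx_iotaF ha hv hk2⟩

lemma ncard_TSet {hn0 : 0 < n} {a : ℕ} (ha : a ≤ n - k) (hk2 : k ≤ n) :
    (TSet k e hn0 a).ncard = k := by
  have hinj : Set.InjOn (iotaF k e hn0 a) (Set.Iio k) := by
    intro x hx y hy hxy
    have h := congrArg (bIdx k e) hxy
    rwa [bIdx_iotaF ha hx hk2, bIdx_iotaF ha hy hk2] at h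
  rw [TSet, Set.ncard_image_of_injOn hinj]
  have h2 : (Set.Iio k) = ↑(Finset.Iio k) := by simp
  rw [h2, Set.ncard_coe_finset, Nat.card_Iio]

lemma exists_shift (hk : 0 < k) (r v : ℕ) (hv : v < k) : ∃ v', v' < k ∧ (v' + r) % k = v := by
  refine ⟨(v + (k - r % k)) % k, Nat.mod_lt _ hk, ?_⟩
  have h1 : r % k < k := Nat.mod_lt _ hk
  rw [Nat.mod_add_mod, ← Nat.add_mod_mod]
  have h2 : v + (k - r % k) + r % k = v + k := by omega
  rw [h2, Nat.add_mod_right, Nat.mod_eq_of_lt hv]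

lemma image_fmapF {hn0 : 0 < n} {a r : ℕ} (ha : a ≤ n - k) (hk1 : 1 ≤ k) (hk2 : k ≤ n) {A : Set S}
    (hA : GoodSet k e A) : fmapF k e hn0 a r '' A = TSet k e hn0 a := by
  apply Set.Subset.antisymm
  · rintro _ ⟨x, hx, rfl⟩
    exact ⟨(bIdx k e x + r) % k, Nat.mod_lt _ (by omega), rfl⟩
  · rintro _ ⟨j, hj, rfl⟩
    obtain ⟨v', hv', hvr⟩ := exists_shift (by omega) r j hj
    obtain ⟨x, hxA, hbx⟩ := hA v' hv'
    refine ⟨x, hxA, ?_⟩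
    unfold fmapF
    rw [hbx, hvr]

lemma range_fwd {hn0 : 0 < n} (F : ℕ → S → S) (hk1 : 1 ≤ k) (hk2 : k ≤ n)
    (HF : ∀ t, 1 ≤ t → ∃ a, a ≤ n - k ∧ ∃ r, F t = fmapF k e hn0 a r) :
    ∀ t, 1 ≤ t → ∃ a, a ≤ n - k ∧ Set.range (fwd F t) = TSet k e hn0 a := by
  intro t ht
  induction t with
  | zero => omega
  | succ s ih =>
    obtain ⟨a, ha, r, hFr⟩ := HF (s + 1) (by omega)
    refine ⟨a, ha, ?_⟩
    have hcomp : fwd F (s + 1) = F (s + 1) ∘ fwd F s := rfl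
    rw [hcomp, Set.range_comp, hFr]
    rcases Nat.eq_zero_or_pos s with h0 | hs
    · subst h0
      have h : Set.range (fwd F 0) = Set.univ := by
        have hid : fwd F 0 = (id : S → S) := rfl
        rw [hid, Set.range_id]
      rw [h]
      exact image_fmapF ha hk1 hk2 (goodSet_univ hn0 hk2)
    · obtain ⟨a', ha', hra⟩ := ih (by omega)
      rw [hra]
      exact image_fmapF ha hk1 hk2 (goodSet_TSet ha' hk2)

lemma kF_eq {hn0 : 0 < n} (F : ℕ → S → S) (hc : Fintype.card S = n) (hk1 : 1 ≤ k) (hk2 : k ≤ n)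
    (HF : ∀ t, 1 ≤ t → ∃ a, a ≤ n - k ∧ ∃ r, F t = fmapF k e hn0 a r) :
    kF F = k := by
  have h0 : ktF F 0 = n := by
    have hid : fwd F 0 = (id : S → S) := rfl
    rw [ktF, hid, Set.range_id, Set.ncard_univ, Nat.card_eq_fintype_card, hc]
  have h1 : ∀ t, 1 ≤ t → ktF F t = k := by
    intro t ht
    obtain ⟨a, ha, hr⟩ := range_fwd F hk1 hk2 HF t ht
    rw [ktF, hr, ncard_TSet ha hk2]
  apply le_antisymm
  · calc kF F ≤ ktF F 1 := ciInf_le (OrderBot.bddBelow _) 1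
      _ = k := h1 1 le_rfl
  · apply le_ciInf
    intro t
    rcases Nat.eq_zero_or_pos t with rfl | h
    · rw [h0]; omega
    · rw [h1 t h]

end Det

section Nu
variable {S : Type*} [Fintype S] [DecidableEq S] [MeasurableSpace S] [DiscreteMeasurableSpace S]
variable {n k : ℕ} {e : S ≃ Fin n}

lemma bIdx_lt (hk1 : 1 ≤ k) (i : S) : bIdx k e i < k := by unfold bIdx; omega

lemma fmapF_eq_iff {hn0 : 0 < n} (i j : S) (a r : ℕ) (ha : a ≤ n - k) (hk1 : 1 ≤ k)
    (hk2 : k ≤ n) :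
    fmapF k e hn0 a r i = j ↔
      (if (e j).val < k - 1 then (bIdx k e i + r) % k = (e j).val
       else (bIdx k e i + r) % k = k - 1 ∧ a = (e j).val - (k - 1)) := by
  set w := (bIdx k e i + r) % k with hw
  have hwk : w < k := Nat.mod_lt _ (by omega)
  have hrfl : fmapF k e hn0 a r i = iotaF k e hn0 a w := rfl
  have hjn : (e j).val < n := (e j).isLt
  rw [hrfl]
  constructor
  · intro h
    have hv := e_iotaF (e := e) (hn0 := hn0) ha hwk hk2
    rw [h] at hv
    split at hv <;> split <;> omega
  · intro h
    have hval : (e (iotaF k e hn0 a w)).val = (e j).val := by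
      rw [e_iotaF ha hwk hk2]
      split_ifs at h with hj
      · rw [if_pos (by omega : w < k - 1)]; omega
      · obtain ⟨h1, h2⟩ := h
        rw [if_neg (by omega)]
        omega
    exact e.injective (Fin.val_injective hval)

-- ZMod helpers
lemma zmod_cond {k : ℕ} [NeZero k] (u v : ℕ) (hu : u < k) (hv : v < k) (r : ZMod k) :
    (u + r.val) % k = v ↔ r = (v : ZMod k) - (u : ZMod k) := by
  have hval : (u + r.val) % k = ((u : ZMod k) + r).val := by
    rw [ZMod.val_add, ZMod.val_cast_of_lt hu]
  rw [hval]
  constructor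
  · intro h
    have h2 : (u : ZMod k) + r = (v : ZMod k) := by
      have := congrArg (Nat.cast : ℕ → ZMod k) h
      rwa [ZMod.natCast_val, ZMod.cast_id] at this
    exact eq_sub_of_add_eq' h2
  · intro h
    subst h
    rw [add_sub_cancel]
    exact ZMod.val_cast_of_lt hv

lemma zmod_val_eq_iff {m : ℕ} [NeZero m] (r : ZMod m) (c : ℕ) (hc : c < m) :
    r.val = c ↔ r = (c : ZMod m) := by
  constructor
  · intro h
    have := congrArg (Nat.cast : ℕ → ZMod m) h
    rwa [ZMod.natCast_val, ZMod.cast_id] at this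
  · intro h
    rw [h, ZMod.val_cast_of_lt hc]

end Nu



section Nu2
attribute [local instance] Classical.propDecidable
variable {S : Type*} [Fintype S] [DecidableEq S] [MeasurableSpace S] [DiscreteMeasurableSpace S]
variable {n k : ℕ} {e : S ≃ Fin n}

/-- the one-step random map, parametrized by `ZMod k × ZMod (n-k+1)` -/
def hfun {n : ℕ} (k : ℕ) (e : S ≃ Fin n) (hn0 : 0 < n) [NeZero k]
    (p : ZMod k × ZMod (n - k + 1)) : S → S :=
  fmapF k e hn0 p.2.val p.1.val

lemma card_hfun_eq {hn0 : 0 < n} [NeZero k] (i j : S) (hk1 : 1 ≤ k) (hk2 : k ≤ n) :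
    (Finset.univ.filter fun p : ZMod k × ZMod (n - k + 1) => hfun k e hn0 p i = j).card
      = if (e j).val < k - 1 then n - k + 1 else 1 := by
  have hu : bIdx k e i < k := bIdx_lt hk1 i
  have hjn : (e j).val < n := (e j).isLt
  by_cases hj : (e j).val < k - 1
  · rw [if_pos hj]
    have hcong : (Finset.univ.filter fun p : ZMod k × ZMod (n - k + 1) => hfun k e hn0 p i = j)
        = Finset.univ.filter fun p : ZMod k × ZMod (n - k + 1) =>
            p.1 = ((e j).val : ZMod k) - (bIdx k e i : ZMod k) := by
      apply Finset.filter_congr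
      intro p _
      have hap : p.2.val ≤ n - k := by
        have := ZMod.val_lt p.2
        omega
      rw [hfun, fmapF_eq_iff i j _ _ hap hk1 hk2, if_pos hj,
        zmod_cond (bIdx k e i) (e j).val hu (by omega) p.1]
    rw [hcong]
    have h : (Finset.univ.filter fun p : ZMod k × ZMod (n - k + 1) =>
        p.1 = ((e j).val : ZMod k) - (bIdx k e i : ZMod k))
        = {((e j).val : ZMod k) - (bIdx k e i : ZMod k)} ×ˢ Finset.univ := by
      ext p
      simp only [Finset.mem_filter, Finset.mem_univ, true_and, Finset.mem_product,
        Finset.mem_singleton, and_true]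
    rw [h, Finset.card_product]
    simp [ZMod.card]
  · rw [if_neg hj]
    have hcong : (Finset.univ.filter fun p : ZMod k × ZMod (n - k + 1) => hfun k e hn0 p i = j)
        = Finset.univ.filter fun p : ZMod k × ZMod (n - k + 1) =>
            p.1 = ((k - 1 : ℕ) : ZMod k) - (bIdx k e i : ZMod k) ∧
            p.2 = (((e j).val - (k - 1) : ℕ) : ZMod (n - k + 1)) := by
      apply Finset.filter_congr
      intro p _
      have hap : p.2.val ≤ n - k := by
        have := ZMod.val_lt p.2
        omega
      rw [hfun, fmapF_eq_iff i j _ _ hap hk1 hk2, if_neg hj,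
        zmod_cond (bIdx k e i) (k - 1) hu (by omega) p.1,
        zmod_val_eq_iff p.2 _ (by omega)]
    rw [hcong]
    have h : (Finset.univ.filter fun p : ZMod k × ZMod (n - k + 1) =>
        p.1 = ((k - 1 : ℕ) : ZMod k) - (bIdx k e i : ZMod k) ∧
        p.2 = (((e j).val - (k - 1) : ℕ) : ZMod (n - k + 1)))
        = {(((k - 1 : ℕ) : ZMod k) - (bIdx k e i : ZMod k),
            (((e j).val - (k - 1) : ℕ) : ZMod (n - k + 1)))} := by
      ext p
      simp [Prod.ext_iff]
    rw [h, Finset.card_singleton]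

/-- the one-step measure -/
noncomputable def nuM {n : ℕ} (k : ℕ) (e : S ≃ Fin n) (hn0 : 0 < n) [NeZero k] :
    Measure (S → S) :=
  ((k * (n - k + 1) : ℕ) : ℝ≥0∞)⁻¹ •
    ∑ p : ZMod k × ZMod (n - k + 1), Measure.dirac (hfun k e hn0 p)

lemma nuM_apply_pred {hn0 : 0 < n} [NeZero k] (E : Set (S → S)) (hE : MeasurableSet E)
    (q : ZMod k × ZMod (n - k + 1) → Prop) [DecidablePred q]
    (hq : ∀ p, hfun k e hn0 p ∈ E ↔ q p) :
    nuM k e hn0 E = ((k * (n - k + 1) : ℕ) : ℝ≥0∞)⁻¹ * (Finset.univ.filter q).card := by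
  classical
  rw [nuM, Measure.smul_apply, smul_eq_mul]
  congr 1
  rw [Measure.finset_sum_apply]
  rw [Finset.sum_congr rfl (fun p _ => Measure.dirac_apply' (hfun k e hn0 p) hE)]
  simp only [Set.indicator_apply, Pi.one_apply]
  rw [Finset.sum_congr rfl (fun p _ => by
    rw [if_congr (hq p) rfl rfl])]
  rw [Finset.sum_boole]
end Nu2



section Nu3
variable {S : Type*} [Fintype S] [DecidableEq S] [MeasurableSpace S] [DiscreteMeasurableSpace S]
variable {n k : ℕ} {e : S ≃ Fin n}

lemma measurableSet_eval (i : S) (j : S) : MeasurableSet {f : S → S | f i = j} := by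
  have h : {f : S → S | f i = j} = (fun f : S → S => f i) ⁻¹' {j} := rfl
  rw [h]
  exact (measurable_pi_apply i) (measurableSet_singleton j)

lemma nuM_singleton {hn0 : 0 < n} [NeZero k] (g : S → S) :
    nuM k e hn0 {g} = ((k * (n - k + 1) : ℕ) : ℝ≥0∞)⁻¹ *
      (Finset.univ.filter fun p : ZMod k × ZMod (n - k + 1) => hfun k e hn0 p = g).card :=
  nuM_apply_pred {g} (measurableSet_singleton g) _ (fun p => Iff.rfl)

lemma nuM_singleton_zero {hn0 : 0 < n} [NeZero k] (g : S → S)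
    (hg : g ∉ Set.range (hfun k e hn0)) : nuM k e hn0 {g} = 0 := by
  rw [nuM_singleton g]
  have h : (Finset.univ.filter fun p : ZMod k × ZMod (n - k + 1) => hfun k e hn0 p = g) = ∅ := by
    apply Finset.filter_false_of_mem
    intro p _ hp
    exact hg ⟨p, hp⟩
  rw [h]
  simp

lemma nuM_univ {hn0 : 0 < n} [NeZero k] (hk1 : 1 ≤ k) :
    nuM k e hn0 Set.univ = 1 := by
  rw [nuM_apply_pred Set.univ MeasurableSet.univ (fun _ => True) (fun p => by simp)]
  have hft : (Finset.univ.filter fun _ : ZMod k × ZMod (n - k + 1) => True) = Finset.univ :=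
    Finset.filter_true_of_mem (fun _ _ => trivial)
  rw [hft, Finset.card_univ, Fintype.card_prod, ZMod.card, ZMod.card]
  rw [ENNReal.inv_mul_cancel]
  · exact Nat.cast_ne_zero.2 (by positivity)
  · exact ENNReal.natCast_ne_top _

lemma nuM_consistent {hn0 : 0 < n} [NeZero k] (hk1 : 1 ≤ k) (hk2 : k ≤ n) (i j : S) :
    nuM k e hn0 {f : S → S | f i = j}
      = ENNReal.ofReal (if (e j).val < k - 1 then (k : ℝ)⁻¹ else ((k * (n - k + 1) : ℕ) : ℝ)⁻¹) := by
  rw [nuM_apply_pred _ (measurableSet_eval i j)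
    (fun p => hfun k e hn0 p i = j) (fun p => Iff.rfl)]
  rw [card_hfun_eq i j hk1 hk2]
  have hm0 : ((n - k + 1 : ℕ) : ℝ≥0∞) ≠ 0 := Nat.cast_ne_zero.2 (by omega)
  have hk0 : ((k : ℕ) : ℝ≥0∞) ≠ 0 := Nat.cast_ne_zero.2 (by omega)
  split_ifs with hj
  · rw [ENNReal.ofReal_inv_of_pos (by exact_mod_cast Nat.pos_of_ne_zero (by omega)),
      ENNReal.ofReal_natCast]
    rw [Nat.cast_mul, ENNReal.mul_inv (Or.inl hk0) (Or.inl (ENNReal.natCast_ne_top _)),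
      mul_assoc, ENNReal.inv_mul_cancel hm0 (ENNReal.natCast_ne_top _), mul_one]
  · rw [Nat.cast_one, mul_one]
    rw [ENNReal.ofReal_inv_of_pos (by positivity), ENNReal.ofReal_natCast]

end Nu3



section Cyl
variable {A : Type*} [AddCommGroup A] [Fintype A] [MeasurableSpace A] [MeasurableSingletonClass A]

/-- A cylinder set in `ℕ → A`. -/
def Cyl (I : Finset ℕ) (d : I → A) : Set (ℕ → A) := {ω | ∀ s : I, ω s = d s}

lemma cyl_measurable (I : Finset ℕ) (d : I → A) : MeasurableSet (Cyl I d) := by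
  have h : Cyl I d = ⋂ s : I, (fun ω : ℕ → A => ω s) ⁻¹' {d s} := by
    ext ω; simp [Cyl]
  rw [h]
  exact MeasurableSet.iInter fun s => (measurable_pi_apply (s : ℕ)) (measurableSet_singleton _)

variable (μ : Measure (ℕ → A)) [IsProbabilityMeasure μ] [μ.IsAddLeftInvariant]

lemma cyl_const (I : Finset ℕ) (d : I → A) :
    μ (Cyl I d) = μ (Cyl I (fun _ => 0)) := by
  classical
  haveI : MeasurableAdd (ℕ → A) := by
    constructor
    · intro c
      exact measurable_pi_lambda _ fun s =>
        (measurable_of_countable (fun x : A => c s + x)).comp (measurable_pi_apply s)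
    · intro c
      exact measurable_pi_lambda _ fun s =>
        (measurable_of_countable (fun x : A => x + c s)).comp (measurable_pi_apply s)
  set g : ℕ → A := fun s => if h : s ∈ I then -(d ⟨s, h⟩) else 0 with hg
  have h : Cyl I d = (fun ω => g + ω) ⁻¹' (Cyl I fun _ => 0) := by
    ext ω
    simp only [Cyl, Set.mem_setOf_eq, Set.mem_preimage, Pi.add_apply]
    refine forall_congr' fun s => ?_
    rw [hg]
    simp only [dif_pos s.2]
    constructor
    · intro h2; rw [h2]; abel
    · intro h2
      have : ω (s : ℕ) = d s := by
        have := congrArg (fun x => d s + x) h2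
        simpa [add_comm, ← add_assoc] using this
      exact this
  rw [h, measure_preimage_add]

lemma cyl_val (I : Finset ℕ) (d : I → A) :
    μ (Cyl I d) = (((Fintype.card A : ℝ≥0∞)) ^ I.card)⁻¹ := by
  classical
  have hdisj : Pairwise (Function.onFun Disjoint fun d : I → A => Cyl I d) := by
    intro d1 d2 hne
    rw [Function.onFun, Set.disjoint_left]
    intro ω h1 h2
    exact hne (funext fun s => (h1 s).symm.trans (h2 s))
  have hunion : (⋃ d : I → A, Cyl I d) = Set.univ := by
    refine Set.eq_univ_of_forall fun ω => ?_
    exact Set.mem_iUnion.2 ⟨fun s => ω s, fun s => rfl⟩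
  have hsum := measure_iUnion (μ := μ) hdisj (fun d => cyl_measurable I d)
  rw [hunion, measure_univ, tsum_fintype] at hsum
  have hall : ∀ d' : I → A, μ (Cyl I d') = μ (Cyl I fun _ => 0) := fun d' => cyl_const μ I d'
  rw [Finset.sum_congr rfl (fun d' _ => hall d'), Finset.sum_const, Finset.card_univ] at hsum
  have hcard : Fintype.card (I → A) = Fintype.card A ^ I.card := by
    rw [Fintype.card_fun, Fintype.card_coe]
  rw [hcard] at hsum
  have hc0 : ((Fintype.card A ^ I.card : ℕ) : ℝ≥0∞) ≠ 0 := by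
    have : 0 < Fintype.card A := Fintype.card_pos
    exact Nat.cast_ne_zero.2 (by positivity)
  have hsum' : ((Fintype.card A ^ I.card : ℕ) : ℝ≥0∞) * μ (Cyl I fun _ => 0) = 1 := by
    rw [← nsmul_eq_mul, ← hsum]
  have hval : μ (Cyl I fun _ => 0) = (((Fintype.card A ^ I.card : ℕ)) : ℝ≥0∞)⁻¹ := by
    have h2 : μ (Cyl I fun _ => 0)
        = ((Fintype.card A ^ I.card : ℕ) : ℝ≥0∞)⁻¹ *
          (((Fintype.card A ^ I.card : ℕ) : ℝ≥0∞) * μ (Cyl I fun _ => 0)) := by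
      rw [← mul_assoc, ENNReal.inv_mul_cancel hc0 (ENNReal.natCast_ne_top _), one_mul]
    rw [h2, hsum', mul_one]
  rw [hall d, hval]
  push_cast
  rfl

end Cyl



section IID
variable {S : Type*} [Fintype S] [DecidableEq S] [MeasurableSpace S] [DiscreteMeasurableSpace S]
variable {A : Type*} [AddCommGroup A] [Fintype A] [MeasurableSpace A] [MeasurableSingletonClass A]
variable (h₀ : A → (S → S))

/-- coordinatewise application -/
def Phi (h₀ : A → (S → S)) : (ℕ → A) → (ℕ → S → S) := fun ω t => h₀ (ω t)

lemma measurable_Phi : Measurable (Phi (S := S) h₀) :=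
  measurable_pi_lambda _ fun t => (measurable_of_countable h₀).comp (measurable_pi_apply t)

lemma measurableSet_cylinder (I : Finset ℕ) (g : ℕ → S → S) :
    MeasurableSet {F : ℕ → S → S | ∀ s ∈ I, F s = g s} := by
  have h : {F : ℕ → S → S | ∀ s ∈ I, F s = g s}
      = ⋂ s ∈ I, (fun F : ℕ → S → S => F s) ⁻¹' {g s} := by
    ext F; simp
  rw [h]
  exact MeasurableSet.biInter I.countable_toSet
    (fun s _ => (measurable_pi_apply s) (measurableSet_singleton _))

variable (μ : Measure (ℕ → A)) [IsProbabilityMeasure μ] [μ.IsAddLeftInvariant]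

lemma map_cylinder (I : Finset ℕ) (g : ℕ → S → S) :
    (μ.map (Phi h₀)) {F | ∀ s ∈ I, F s = g s}
      = ∏ s ∈ I, (((Finset.univ.filter fun a : A => h₀ a = g s).card : ℝ≥0∞)
          * ((Fintype.card A : ℝ≥0∞))⁻¹) := by
  classical
  rw [Measure.map_apply (measurable_Phi h₀) (measurableSet_cylinder I g)]
  have hpre : Phi h₀ ⁻¹' {F | ∀ s ∈ I, F s = g s}
      = ⋃ d : {d : I → A // ∀ s : I, h₀ (d s) = g ↑s}, Cyl I d.1 := by
    ext ω
    simp only [Set.mem_preimage, Set.mem_setOf_eq, Set.mem_iUnion]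
    constructor
    · intro h
      exact ⟨⟨fun s => ω s, fun s => h s s.2⟩, fun s => rfl⟩
    · rintro ⟨⟨d, hd⟩, hc⟩ s hs
      have h1 : ω s = d ⟨s, hs⟩ := hc ⟨s, hs⟩
      show h₀ (ω s) = g s
      rw [h1]
      exact hd ⟨s, hs⟩
  rw [hpre]
  have hdisj : Pairwise (Function.onFun Disjoint
      fun d : {d : I → A // ∀ s : I, h₀ (d s) = g ↑s} => Cyl I d.1) := by
    intro d1 d2 hne
    rw [Function.onFun, Set.disjoint_left]
    intro ω h1 h2
    exact hne (Subtype.ext (funext fun s => (h1 s).symm.trans (h2 s)))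
  rw [measure_iUnion hdisj (fun d => cyl_measurable I d.1), tsum_fintype]
  rw [Finset.sum_congr rfl (fun d _ => cyl_val μ I d.1), Finset.sum_const, Finset.card_univ,
    nsmul_eq_mul]
  have hcard : Fintype.card {d : I → A // ∀ s : I, h₀ (d s) = g ↑s}
      = ∏ s : I, (Finset.univ.filter fun a : A => h₀ a = g ↑s).card := by
    rw [Fintype.card_congr (Equiv.subtypePiEquivPi (p := fun (s : I) (a : A) => h₀ a = g ↑s)),
      Fintype.card_pi]
    exact Finset.prod_congr rfl fun s _ => Fintype.card_subtype _
  rw [hcard]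
  rw [← Finset.prod_coe_sort I
    (fun s => (((Finset.univ.filter fun a : A => h₀ a = g s).card : ℝ≥0∞)
      * ((Fintype.card A : ℝ≥0∞))⁻¹))]
  rw [Finset.prod_mul_distrib, Finset.prod_const, Finset.card_univ, Fintype.card_coe]
  rw [Nat.cast_prod, ENNReal.inv_pow]
end IID



-- STATEMENT 10
theorem stmt10 [Fintype S] [DecidableEq S]
    [MeasurableSpace S] [DiscreteMeasurableSpace S]
    (n : ℕ) (hcard : Fintype.card S = n) (hn : 2 ≤ n)
    (k : ℕ) (hk1 : 1 ≤ k) (hk2 : k ≤ n) :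
    ∃ P : S → S → ℝ, IsStochastic P ∧ Irred P ∧ Aperiodic P ∧
      ∃ ν : Measure (S → S), IsProbabilityMeasure ν ∧ Consistent P ν ∧
        ∃ μbar : Measure (ℕ → S → S), IsProbabilityMeasure μbar ∧ IsIID ν μbar ∧
          μbar {F | kF F = k} = 1 := by
  classical
  have hn0 : 0 < n := by omega
  haveI : NeZero k := ⟨by omega⟩
  obtain ⟨e⟩ : Nonempty (S ≃ Fin n) := ⟨Fintype.equivFinOfCardEq hcard⟩
  -- the transition matrix
  set P : S → S → ℝ := fun _ j =>
    if (e j).val < k - 1 then (k : ℝ)⁻¹ else ((k * (n - k + 1) : ℕ) : ℝ)⁻¹ with hP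
  have hkR : (0 : ℝ) < (k : ℝ) := by exact_mod_cast hk1
  have hNpos : 0 < k * (n - k + 1) := by positivity
  have hNR : (0 : ℝ) < ((k * (n - k + 1) : ℕ) : ℝ) := by exact_mod_cast hNpos
  have hPpos : ∀ i j, 0 < P i j := by
    intro i j
    rw [hP]
    dsimp only
    split
    · exact inv_pos.2 hkR
    · exact inv_pos.2 hNR
  have hstoch : IsStochastic P := by
    constructor
    · exact fun i j => (hPpos i j).le
    · intro i
      have hre : ∑ j : S, P i j
          = ∑ x : Fin n, (if (x : ℕ) < k - 1 then (k : ℝ)⁻¹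
              else ((k * (n - k + 1) : ℕ) : ℝ)⁻¹) := by
        rw [← Equiv.sum_comp e (fun x : Fin n =>
          (if (x : ℕ) < k - 1 then (k : ℝ)⁻¹ else ((k * (n - k + 1) : ℕ) : ℝ)⁻¹))]
      rw [hre, Finset.sum_ite, Finset.sum_const, Finset.sum_const]
      have hc1 : (Finset.univ.filter fun x : Fin n => (x : ℕ) < k - 1).card = k - 1 := by
        rw [← Fintype.card_subtype]
        have heqv : {x : Fin n // (x : ℕ) < k - 1} ≃ Fin (k - 1) :=
          { toFun := fun x => ⟨x.1.1, x.2⟩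
            invFun := fun y => ⟨⟨y.1, by omega⟩, y.2⟩
            left_inv := fun x => rfl
            right_inv := fun y => rfl }
        rw [Fintype.card_congr heqv, Fintype.card_fin]
      have hc2 : (Finset.univ.filter fun x : Fin n => ¬ ((x : ℕ) < k - 1)).card
          = n - k + 1 := by
        have := Finset.card_filter_add_card_filter_not
          (s := (Finset.univ : Finset (Fin n))) (p := fun x : Fin n => (x : ℕ) < k - 1)
        rw [Finset.card_univ, Fintype.card_fin, hc1] at this
        omega
      rw [hc1, hc2, nsmul_eq_mul, nsmul_eq_mul, Nat.cast_mul]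
      have hm0 : ((n - k + 1 : ℕ) : ℝ) ≠ 0 := by positivity
      have hk0 : ((k : ℕ) : ℝ) ≠ 0 := ne_of_gt hkR
      have hcast : ((k - 1 : ℕ) : ℝ) = (k : ℝ) - 1 := by
        rw [Nat.cast_sub hk1, Nat.cast_one]
      rw [hcast]
      generalize ((n - k + 1 : ℕ) : ℝ) = M at hm0 ⊢
      field_simp
      ring
  refine ⟨P, hstoch, ?_, ?_, ?_⟩
  · -- irreducible
    intro i j
    refine ⟨1, le_rfl, ?_⟩
    rw [pow_one]
    exact hPpos i j
  · -- aperiodic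
    intro i d hd
    have h1 : d ∣ 1 := hd 1 le_rfl (by rw [pow_one]; exact hPpos i i)
    exact Nat.dvd_one.mp h1
  -- the measure ν and μbar
  refine ⟨nuM k e hn0, ⟨nuM_univ hk1⟩, ?_, ?_⟩
  · intro i j
    rw [nuM_consistent hk1 hk2 i j]
  · -- μbar
    haveI : IsProbabilityMeasure
        (Measure.addHaarMeasure (G := ℕ → ZMod k × ZMod (n - k + 1)) ⊤) := by
      constructor
      have := Measure.addHaarMeasure_self (K₀ := (⊤ : TopologicalSpace.PositiveCompacts
        (ℕ → ZMod k × ZMod (n - k + 1))))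
      simpa using this
    set μH : Measure (ℕ → ZMod k × ZMod (n - k + 1)) := Measure.addHaarMeasure ⊤ with hμH
    set μbar : Measure (ℕ → S → S) := μH.map (Phi (hfun k e hn0)) with hμbar
    haveI hbar_prob : IsProbabilityMeasure μbar :=
      Measure.isProbabilityMeasure_map (measurable_Phi (hfun k e hn0)).aemeasurable
    have hiid : IsIID (nuM k e hn0) μbar := by
      intro I g
      rw [hμbar, map_cylinder (hfun k e hn0) μH I g]
      refine Finset.prod_congr rfl fun s _ => ?_
      rw [nuM_singleton (g s)]
      rw [Fintype.card_prod, ZMod.card, ZMod.card, mul_comm]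
    refine ⟨μbar, hbar_prob, hiid, ?_⟩
    -- almost sure coalescence number
    set B : Set (ℕ → S → S) :=
      {F | ∀ t, 1 ≤ t → F t ∈ Set.range (hfun k e hn0)} with hB
    have hBsub : B ⊆ {F | kF F = k} := by
      intro F hF
      refine kF_eq (e := e) (hn0 := hn0) F hcard hk1 hk2 ?_
      intro t ht
      obtain ⟨p, hp⟩ := hF t ht
      refine ⟨p.2.val, ?_, p.1.val, hp.symm⟩
      have := ZMod.val_lt p.2
      omega
    have hBc : μbar Bᶜ = 0 := by
      have hsub : Bᶜ ⊆ ⋃ t : ℕ, ⋃ g' : {g' : S → S // g' ∉ Set.range (hfun k e hn0)},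
          {F : ℕ → S → S | F t = g'.1} := by
        intro F hF
        rw [hB] at hF
        simp only [Set.mem_compl_iff, Set.mem_setOf_eq, not_forall] at hF
        obtain ⟨t, _, hng⟩ := hF
        exact Set.mem_iUnion.2 ⟨t, Set.mem_iUnion.2 ⟨⟨F t, hng⟩, rfl⟩⟩
      refine measure_mono_null hsub ?_
      refine measure_iUnion_null fun t => measure_iUnion_null fun g' => ?_
      have hone : {F : ℕ → S → S | F t = g'.1}
          = {F : ℕ → S → S | ∀ s ∈ ({t} : Finset ℕ), F s = (fun _ => g'.1) s} := by
        ext F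
        simp
      rw [hone, hiid {t} (fun _ => g'.1), Finset.prod_singleton]
      exact nuM_singleton_zero g'.1 g'.2
    apply le_antisymm
    · calc μbar {F | kF F = k} ≤ μbar Set.univ := measure_mono (Set.subset_univ _)
        _ = 1 := measure_univ
    · calc (1 : ℝ≥0∞) = μbar Set.univ := measure_univ.symm
        _ = μbar (B ∪ Bᶜ) := by rw [Set.union_compl_self]
        _ ≤ μbar B + μbar Bᶜ := measure_union_le _ _
        _ = μbar B := by rw [hBc, add_zero]
        _ ≤ μbar {F | kF F = k} := measure_mono hBsub


end CFTP
end

section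
/- Let S be a finite set with |S| = n ≥ 2 and let P be an irreducible stochastic matrix on S. Then n ∈ K(P) if and only if P is doubly stochastic; that is, there exists a probability measure μ consistent with P having coalescence number k(μ) = n if and only if all column sums of P equal 1. -/
set_option linter.unusedSectionVars false
set_option linter.unusedVariables false


open MeasureTheory

namespace CFTP

variable {S : Type*}

/-! ### Auxiliary lemmas for `stmt12` -/

private instance factOneReal : Fact ((0:ℝ) < 1) := ⟨one_pos⟩

private lemma measurable_of_finite' {β γ : Type*} [MeasurableSpace β] [MeasurableSingletonClass β]
    [Finite β] [MeasurableSpace γ] (f : β → γ) : Measurable f :=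
  fun _ _ => (Set.toFinite _).measurableSet

section FinHelpers

variable {S : Type*} [Fintype S] [DecidableEq S] [MeasurableSpace S] [DiscreteMeasurableSpace S]

private lemma measure_setOf_eq_sum (μ : Measure (S → S)) (p : (S → S) → Prop) [DecidablePred p] :
    μ {g | p g} = ∑ g ∈ Finset.univ.filter p, μ {g} := by
  have h : {g | p g} = ⋃ g ∈ Finset.univ.filter p, ({g} : Set (S → S)) := by
    ext g; simp
  rw [h, measure_biUnion_finset ?hd fun g _ => measurableSet_singleton g]
  case hd =>
    intro a _ b _ hab
    exact Set.disjoint_singleton.mpr hab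

private lemma fwd_bijective (f : ℕ → S → S) (hf : ∀ s, Function.Bijective (f s)) (t : ℕ) :
    Function.Bijective (fwd f t) := by
  induction t with
  | zero => exact Function.bijective_id
  | succ t ih => exact (hf (t + 1)).comp ih

private lemma ktF_le (f : ℕ → S → S) (t : ℕ) : ktF f t ≤ Fintype.card S := by
  calc ktF f t ≤ (Set.univ : Set S).ncard :=
        Set.ncard_le_ncard (Set.subset_univ _) (Set.toFinite _)
    _ = Fintype.card S := by rw [Set.ncard_univ, Nat.card_eq_fintype_card]

private lemma ktF_eq_card_of_surj (f : ℕ → S → S) (t : ℕ)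
    (h : Function.Surjective (fwd f t)) : ktF f t = Fintype.card S := by
  rw [ktF, Set.range_eq_univ.2 h, Set.ncard_univ, Nat.card_eq_fintype_card]

private lemma surj_of_ktF_eq_card (f : ℕ → S → S) (t : ℕ)
    (h : ktF f t = Fintype.card S) : Function.Surjective (fwd f t) := by
  rw [← Set.range_eq_univ]
  refine (Set.eq_of_subset_of_ncard_le (Set.subset_univ _) ?_ (Set.toFinite _))
  rw [Set.ncard_univ, Nat.card_eq_fintype_card, ← h]
  exact le_of_eq rfl

private lemma kF_eq_card_iff (f : ℕ → S → S) :
    kF f = Fintype.card S ↔ ∀ t, ktF f t = Fintype.card S := by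
  constructor
  · intro h t
    refine le_antisymm (ktF_le f t) ?_
    rw [← h]
    exact ciInf_le (OrderBot.bddBelow _) t
  · intro h
    have : (fun t => ktF f t) = fun _ => Fintype.card S := funext h
    rw [kF, this]
    exact ciInf_const

private lemma measurable_fwd (t : ℕ) : Measurable (fun f : ℕ → S → S => fwd f t) := by
  induction t with
  | zero => exact measurable_const
  | succ t ih =>
    have h : (fun f : ℕ → S → S => fwd f (t + 1))
        = (fun p : (S → S) × (S → S) => p.1 ∘ p.2) ∘ (fun f => (f (t + 1), fwd f t)) := rfl
    rw [h]
    exact (measurable_of_finite' _).comp ((measurable_pi_apply _).prodMk ih)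

private lemma measurable_ktF (t : ℕ) : Measurable (fun f : ℕ → S → S => ktF f t) := by
  have h : (fun f : ℕ → S → S => ktF f t)
      = (fun g : S → S => (Set.range g).ncard) ∘ (fun f => fwd f t) := rfl
  rw [h]
  exact (measurable_of_finite' _).comp (measurable_fwd t)

private lemma measurableSet_kF_eq_card :
    MeasurableSet {f : ℕ → S → S | kF f = Fintype.card S} := by
  have h : {f : ℕ → S → S | kF f = Fintype.card S}
      = ⋂ t, {f : ℕ → S → S | ktF f t = Fintype.card S} := by
    ext f
    simp only [Set.mem_setOf_eq, Set.mem_iInter]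
    exact kF_eq_card_iff f
  rw [h]
  exact MeasurableSet.iInter fun t => (measurable_ktF t) (measurableSet_singleton _)

end FinHelpers
section Quantile

variable {S : Type*} [Fintype S] [DecidableEq S]

private noncomputable def vseq (w : Equiv.Perm S → ℝ) (k : ℕ) : ℝ :=
  if h : k < Fintype.card (Equiv.Perm S) then
    w ((Fintype.equivFin (Equiv.Perm S)).symm ⟨k, h⟩) else 0

private noncomputable def cums (w : Equiv.Perm S → ℝ) (k : ℕ) : ℝ :=
  ∑ j ∈ Finset.range k, vseq w j

private noncomputable def pidx (w : Equiv.Perm S → ℝ) (x : ℝ) : Equiv.Perm S :=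
  if h : ∃ k, k < Fintype.card (Equiv.Perm S) ∧ x ∈ Set.Ioc (cums w k) (cums w (k + 1))
  then (Fintype.equivFin (Equiv.Perm S)).symm ⟨h.choose, h.choose_spec.1⟩
  else (Fintype.equivFin (Equiv.Perm S)).symm ⟨0, Fintype.card_pos⟩

private noncomputable def qmap (w : Equiv.Perm S → ℝ) (y : AddCircle (1:ℝ)) : S → S :=
  ⇑(pidx w ((AddCircle.equivIco 1 0 y : Set.Ico (0:ℝ) (0 + 1)) : ℝ))

variable {w : Equiv.Perm S → ℝ}

private lemma vseq_nonneg (hw0 : ∀ σ, 0 ≤ w σ) (k : ℕ) : 0 ≤ vseq w k := by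
  unfold vseq; split
  · exact hw0 _
  · exact le_refl 0

private lemma cums_mono (hw0 : ∀ σ, 0 ≤ w σ) : Monotone (cums w) := by
  intro a b hab
  exact Finset.sum_le_sum_of_subset_of_nonneg (Finset.range_subset_range.2 hab)
    (fun j _ _ => vseq_nonneg hw0 j)

private lemma cums_zero : cums w 0 = 0 := by simp [cums]

private lemma cums_card (hw1 : ∑ σ, w σ = 1) :
    cums w (Fintype.card (Equiv.Perm S)) = 1 := by
  rw [cums, ← Fin.sum_univ_eq_sum_range]
  rw [← Equiv.sum_comp (Fintype.equivFin (Equiv.Perm S)).symm w] at hw1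
  rw [← hw1]
  refine Finset.sum_congr rfl fun i _ => ?_
  simp [vseq, i.isLt]

private lemma pieces_eq (hw0 : ∀ σ, 0 ≤ w σ) {x : ℝ} {k k' : ℕ}
    (h : x ∈ Set.Ioc (cums w k) (cums w (k + 1)))
    (h' : x ∈ Set.Ioc (cums w k') (cums w (k' + 1))) : k = k' := by
  by_contra hne
  rcases Nat.lt_or_ge k k' with hlt | hge
  · have h1 : cums w (k + 1) ≤ cums w k' := cums_mono hw0 hlt
    have h2 := h.2; have h3 := h'.1; linarith
  · have hlt : k' < k := lt_of_le_of_ne hge (Ne.symm hne)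
    have h1 : cums w (k' + 1) ≤ cums w k := cums_mono hw0 hlt
    have h2 := h'.2; have h3 := h.1; linarith

private lemma pidx_eq (hw0 : ∀ σ, 0 ≤ w σ) {x : ℝ} {k : ℕ}
    (hk : k < Fintype.card (Equiv.Perm S))
    (hx : x ∈ Set.Ioc (cums w k) (cums w (k + 1))) :
    pidx w x = (Fintype.equivFin (Equiv.Perm S)).symm ⟨k, hk⟩ := by
  have hex : ∃ k, k < Fintype.card (Equiv.Perm S)
      ∧ x ∈ Set.Ioc (cums w k) (cums w (k + 1)) := ⟨k, hk, hx⟩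
  rw [pidx, dif_pos hex]
  congr 1
  exact Fin.ext (pieces_eq hw0 hex.choose_spec.2 hx)

private lemma exists_piece_aux (c : ℕ → ℝ) :
    ∀ m x, c 0 < x → x ≤ c m → ∃ k, k < m ∧ x ∈ Set.Ioc (c k) (c (k + 1)) := by
  intro m
  induction m with
  | zero => exact fun x h0 h1 => absurd (lt_of_lt_of_le h0 h1) (lt_irrefl _)
  | succ m ih =>
    intro x h0 h1
    by_cases hx : x ≤ c m
    · obtain ⟨k, hk, hmem⟩ := ih x h0 hx
      exact ⟨k, Nat.lt_succ_of_lt hk, hmem⟩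
    · exact ⟨m, Nat.lt_succ_self m, ⟨lt_of_not_ge hx, h1⟩⟩

private lemma exists_piece (hw0 : ∀ σ, 0 ≤ w σ) (hw1 : ∑ σ, w σ = 1) {x : ℝ}
    (hx : x ∈ Set.Ioc (0:ℝ) 1) :
    ∃ k, k < Fintype.card (Equiv.Perm S)
      ∧ x ∈ Set.Ioc (cums w k) (cums w (k + 1)) := by
  refine exists_piece_aux (cums w) _ x ?_ ?_
  · rw [cums_zero]; exact hx.1
  · rw [cums_card hw1]; exact hx.2

private lemma measurableSet_pidx_pre (hw0 : ∀ σ, 0 ≤ w σ) (σ : Equiv.Perm S) :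
    MeasurableSet {x : ℝ | pidx w x = σ} := by
  classical
  set m := Fintype.card (Equiv.Perm S) with hm
  set k₀ : ℕ := ((Fintype.equivFin (Equiv.Perm S)) σ : ℕ) with hk₀def
  have hk₀ : k₀ < m := ((Fintype.equivFin (Equiv.Perm S)) σ).isLt
  have heσ : (Fintype.equivFin (Equiv.Perm S)).symm ⟨k₀, hk₀⟩ = σ := by
    simp [hk₀def]
  have hset : {x : ℝ | pidx w x = σ} =
      Set.Ioc (cums w k₀) (cums w (k₀ + 1)) ∪
        {x : ℝ | (¬ ∃ k', k' < m ∧ x ∈ Set.Ioc (cums w k') (cums w (k' + 1)))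
          ∧ σ = (Fintype.equivFin (Equiv.Perm S)).symm ⟨0, Fintype.card_pos⟩} := by
    ext x
    simp only [Set.mem_setOf_eq, Set.mem_union]
    constructor
    · intro h
      by_cases hex : ∃ k', k' < m ∧ x ∈ Set.Ioc (cums w k') (cums w (k' + 1))
      · left
        obtain ⟨k', hk', hxk'⟩ := hex
        have hpx : pidx w x = (Fintype.equivFin (Equiv.Perm S)).symm ⟨k', hk'⟩ :=
          pidx_eq hw0 hk' hxk'
        have : k' = k₀ := by
          have h2 := hpx.symm.trans h
          have h3 := congrArg (Fintype.equivFin (Equiv.Perm S)) h2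
          simp only [Equiv.apply_symm_apply] at h3
          rw [hk₀def, ← h3]
        rwa [this] at hxk'
      · right
        refine ⟨hex, ?_⟩
        rw [← h, pidx, dif_neg hex]
    · intro h
      rcases h with h | ⟨hex, hσ⟩
      · rw [pidx_eq hw0 hk₀ h, heσ]
      · rw [pidx, dif_neg hex, ← hσ]
  rw [hset]
  refine MeasurableSet.union measurableSet_Ioc ?_
  by_cases hσ : σ = (Fintype.equivFin (Equiv.Perm S)).symm ⟨0, Fintype.card_pos⟩
  · have : {x : ℝ | (¬ ∃ k', k' < m ∧ x ∈ Set.Ioc (cums w k') (cums w (k' + 1))) ∧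
        σ = (Fintype.equivFin (Equiv.Perm S)).symm ⟨0, Fintype.card_pos⟩}
        = (⋃ (k' : ℕ) (_ : k' < m), Set.Ioc (cums w k') (cums w (k' + 1)))ᶜ := by
      ext x; simp [hσ]
    rw [this]
    exact (MeasurableSet.iUnion fun k' =>
      MeasurableSet.iUnion fun _ => measurableSet_Ioc).compl
  · have : {x : ℝ | (¬ ∃ k', k' < m ∧ x ∈ Set.Ioc (cums w k') (cums w (k' + 1))) ∧
        σ = (Fintype.equivFin (Equiv.Perm S)).symm ⟨0, Fintype.card_pos⟩} = ∅ := by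
      ext x; simp only [hσ, and_false, Set.mem_setOf_eq, Set.mem_empty_iff_false]
    rw [this]
    exact MeasurableSet.empty

private lemma measurable_qmap [MeasurableSpace S] [DiscreteMeasurableSpace S]
    (hw0 : ∀ σ, 0 ≤ w σ) : Measurable (qmap w) := by
  classical
  have h1 : Measurable fun y : AddCircle (1:ℝ) =>
      ((AddCircle.equivIco 1 0 y : Set.Ico (0:ℝ) (0 + 1)) : ℝ) :=
    measurable_subtype_coe.comp (AddCircle.measurableEquivIco 1 0).measurable
  have h2 : Measurable fun x : ℝ => (⇑(pidx w x) : S → S) := by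
    refine measurable_to_countable' fun g => ?_
    by_cases hg : ∃ σ : Equiv.Perm S, ⇑σ = g
    · obtain ⟨σ, rfl⟩ := hg
      have : (fun x : ℝ => (⇑(pidx w x) : S → S)) ⁻¹' {⇑σ} = {x : ℝ | pidx w x = σ} := by
        ext x
        simp only [Set.mem_preimage, Set.mem_singleton_iff, Set.mem_setOf_eq]
        exact ⟨fun h => Equiv.coe_fn_injective h, fun h => by rw [h]⟩
      rw [this]
      exact measurableSet_pidx_pre hw0 σ
    · have : (fun x : ℝ => (⇑(pidx w x) : S → S)) ⁻¹' {g} = ∅ := by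
        ext x
        simp only [Set.mem_preimage, Set.mem_singleton_iff, Set.mem_empty_iff_false,
          iff_false]
        exact fun h => hg ⟨pidx w x, h⟩
      rw [this]
      exact MeasurableSet.empty
  exact h2.comp h1

private lemma qmap_coe {x : ℝ} (hx : x ∈ Set.Ico (0:ℝ) (0 + 1)) :
    qmap w ((x : AddCircle (1:ℝ))) = ⇑(pidx w x) := by
  have h : (AddCircle.equivIco 1 0) ((x : AddCircle (1:ℝ))) = ⟨x, hx⟩ := by
    rw [Equiv.apply_eq_iff_eq_symm_apply]; rfl
  rw [qmap, h]

private lemma qmap_bijective (y : AddCircle (1:ℝ)) : Function.Bijective (qmap w y) :=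
  (pidx w _).bijective

private lemma volume_qmap_perm [MeasurableSpace S] [DiscreteMeasurableSpace S]
    (hw0 : ∀ σ, 0 ≤ w σ) (hw1 : ∑ σ, w σ = 1) (σ : Equiv.Perm S) :
    volume (qmap w ⁻¹' {⇑σ}) = ENNReal.ofReal (w σ) := by
  classical
  set m := Fintype.card (Equiv.Perm S) with hm
  set k₀ : ℕ := ((Fintype.equivFin (Equiv.Perm S)) σ : ℕ) with hk₀def
  have hk₀ : k₀ < m := ((Fintype.equivFin (Equiv.Perm S)) σ).isLt
  have heσ : (Fintype.equivFin (Equiv.Perm S)).symm ⟨k₀, hk₀⟩ = σ := by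
    simp [hk₀def]
  have hc0 : (0:ℝ) ≤ cums w k₀ := by
    have := cums_mono hw0 (Nat.zero_le k₀)
    rwa [cums_zero] at this
  have hc1 : cums w (k₀ + 1) ≤ 1 := by
    have := cums_mono hw0 (Nat.succ_le_of_lt hk₀)
    rwa [cums_card hw1] at this
  have hmeas : MeasurableSet (qmap w ⁻¹' {⇑σ}) :=
    measurable_qmap hw0 (measurableSet_singleton _)
  have hsub : ∀ x : ℝ, x ∈ Set.Ioo (0:ℝ) 1 →
      ((x : AddCircle (1:ℝ)) ∈ qmap w ⁻¹' {⇑σ}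
        ↔ x ∈ Set.Ioc (cums w k₀) (cums w (k₀ + 1))) := by
    intro x hx
    have hmem : x ∈ Set.Ico (0:ℝ) (0 + 1) := ⟨le_of_lt hx.1, by simpa using hx.2⟩
    rw [Set.mem_preimage, Set.mem_singleton_iff, qmap_coe hmem]
    constructor
    · intro h
      have hσ' : pidx w x = σ := Equiv.coe_fn_injective h
      obtain ⟨k', hk', hxk'⟩ := exists_piece hw0 hw1 ⟨hx.1, le_of_lt hx.2⟩
      have hp : pidx w x = (Fintype.equivFin (Equiv.Perm S)).symm ⟨k', hk'⟩ :=
        pidx_eq hw0 hk' hxk'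
      have hkk : k' = k₀ := by
        have h2 := hp.symm.trans hσ'
        have h3 := congrArg (Fintype.equivFin (Equiv.Perm S)) h2
        simp only [Equiv.apply_symm_apply] at h3
        rw [hk₀def, ← h3]
      rwa [hkk] at hxk'
    · intro h
      rw [pidx_eq hw0 hk₀ h, heσ]
  rw [AddCircle.add_projection_respects_measure (T := 1) 0 hmeas]
  have hone : volume ({(1:ℝ)} : Set ℝ) = 0 := Real.volume_singleton
  rw [← measure_diff_null (s := QuotientAddGroup.mk ⁻¹' (qmap w ⁻¹' {⇑σ}) ∩ Set.Ioc 0 (0 + 1))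
    hone]
  have hEq : (QuotientAddGroup.mk ⁻¹' (qmap w ⁻¹' {⇑σ}) ∩ Set.Ioc 0 (0 + 1)) \ {(1:ℝ)}
      = Set.Ioc (cums w k₀) (cums w (k₀ + 1)) \ {(1:ℝ)} := by
    ext x
    simp only [Set.mem_diff, Set.mem_inter_iff, Set.mem_singleton_iff, Set.mem_preimage]
    constructor
    · rintro ⟨⟨hq, hIoc⟩, hne⟩
      have hxo : x ∈ Set.Ioo (0:ℝ) 1 :=
        ⟨hIoc.1, lt_of_le_of_ne (by simpa using hIoc.2) hne⟩
      exact ⟨(hsub x hxo).1 hq, hne⟩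
    · rintro ⟨hmemk, hne⟩
      have hxo : x ∈ Set.Ioo (0:ℝ) 1 :=
        ⟨lt_of_le_of_lt hc0 hmemk.1, lt_of_le_of_ne (le_trans hmemk.2 hc1) hne⟩
      exact ⟨⟨(hsub x hxo).2 hmemk, ⟨hxo.1, by simpa using le_of_lt hxo.2⟩⟩, hne⟩
  rw [hEq, measure_diff_null hone, Real.volume_Ioc]
  have hstep : cums w (k₀ + 1) - cums w k₀ = vseq w k₀ := by
    rw [cums, Finset.sum_range_succ, ← cums]; ring
  rw [hstep]
  have : vseq w k₀ = w σ := by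
    rw [vseq, dif_pos hk₀, heσ]
  rw [this]

end Quantile
section HaarCyl

open scoped ENNReal

private noncomputable def haarG : Measure (ℕ → AddCircle (1:ℝ)) :=
  Measure.addHaarMeasure ⟨⟨Set.univ, isCompact_univ⟩, by simp⟩

private lemma haarG_univ : haarG Set.univ = 1 := Measure.addHaarMeasure_self

private instance haarG_prob : IsProbabilityMeasure haarG := ⟨haarG_univ⟩

private instance haarG_haar : Measure.IsAddHaarMeasure haarG :=
  Measure.isAddHaarMeasure_addHaarMeasure _

private lemma haarG_cyl (I : Finset ℕ) (B : ℕ → Set (AddCircle (1:ℝ)))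
    (hB : ∀ s, MeasurableSet (B s)) :
    haarG {x | ∀ s ∈ I, x s ∈ B s} = ∏ s ∈ I, volume (B s) := by
  classical
  haveI : IsProbabilityMeasure (volume : Measure (AddCircle (1:ℝ))) :=
    ⟨by simp [AddCircle.measure_univ]⟩
  set π : (ℕ → AddCircle (1:ℝ)) →+ (↥I → AddCircle (1:ℝ)) :=
    AddMonoidHom.mk' (fun x (i : I) => x i) (fun a b => rfl) with hπ
  have hπc : Continuous π := continuous_pi fun i => continuous_apply _
  have hπs : Function.Surjective π := by
    intro y
    refine ⟨fun s => if h : s ∈ I then y ⟨s, h⟩ else 0, ?_⟩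
    funext i
    simp [hπ, i.2]
  haveI : Measure.IsAddHaarMeasure (Measure.map π haarG) :=
    Measure.isAddHaarMeasure_map_of_isFiniteMeasure haarG π hπc hπs
  haveI : IsProbabilityMeasure (Measure.map π haarG) :=
    Measure.isProbabilityMeasure_map hπc.measurable.aemeasurable
  have hmap : Measure.map π haarG = Measure.pi (fun _ : I => volume) :=
    Measure.isAddHaarMeasure_eq_of_isProbabilityMeasure _ _
  have hset : {x : ℕ → AddCircle (1:ℝ) | ∀ s ∈ I, x s ∈ B s}
      = π ⁻¹' (Set.univ.pi fun i : I => B i) := by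
    ext x
    simp [hπ, Set.mem_pi]
  rw [hset, ← Measure.map_apply hπc.measurable
    (MeasurableSet.univ_pi fun i => hB i), hmap, Measure.pi_pi]
  exact Finset.prod_coe_sort I fun s => volume (B s)

end HaarCyl
-- STATEMENT 12
theorem stmt12 [Fintype S] [DecidableEq S]
    [MeasurableSpace S] [DiscreteMeasurableSpace S]
    (n : ℕ) (hcard : Fintype.card S = n) (hn : 2 ≤ n)
    (P : S → S → ℝ) (hP : IsStochastic P) (hirr : Irred P) :
    (∃ ν : Measure (S → S), IsProbabilityMeasure ν ∧ Consistent P ν ∧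
      ∃ μbar : Measure (ℕ → S → S), IsProbabilityMeasure μbar ∧ IsIID ν μbar ∧
        μbar {F | kF F = n} = 1) ↔ (∀ j, ∑ i, P i j = 1) := by
  classical
  constructor
  · rintro ⟨ν, hνp, hcons, μb, hμp, hiid, h1⟩ j
    have hsurj0 : ∀ g : S → S, ¬ Function.Surjective g → ν {g} = 0 := by
      intro g hg
      have hBmeas : MeasurableSet {F : ℕ → S → S | Function.Surjective (F 1)} := by
        have h : {F : ℕ → S → S | Function.Surjective (F 1)}
            = (fun F : ℕ → S → S => F 1) ⁻¹' {g : S → S | Function.Surjective g} := rfl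
        rw [h]
        exact measurable_pi_apply 1 ((Set.toFinite _).measurableSet)
      have hsub : {F : ℕ → S → S | kF F = n} ⊆ {F | Function.Surjective (F 1)} := by
        intro F hF
        have hk : kF F = Fintype.card S := by rw [hcard]; exact hF
        have hktF := (kF_eq_card_iff F).1 hk 1
        have hs := surj_of_ktF_eq_card F 1 hktF
        have hfwd1 : fwd F 1 = F 1 := by funext x; rfl
        rwa [hfwd1] at hs
      have hB1 : μb {F | Function.Surjective (F 1)} = 1 :=
        le_antisymm prob_le_one (h1 ▸ measure_mono hsub)
      have hBc : μb {F | Function.Surjective (F 1)}ᶜ = 0 :=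
        (prob_compl_eq_zero_iff hBmeas).2 hB1
      have hν1 : μb {F : ℕ → S → S | ∀ s ∈ ({1} : Finset ℕ), F s = g} = ν {g} := by
        have h := hiid {1} (fun _ => g)
        simpa using h
      have hsub2 : {F : ℕ → S → S | ∀ s ∈ ({1} : Finset ℕ), F s = g}
          ⊆ {F | Function.Surjective (F 1)}ᶜ := by
        intro F hF hFs
        have h5 : F 1 = g := hF 1 (Finset.mem_singleton_self 1)
        exact hg (h5 ▸ hFs)
      rw [← hν1]
      exact le_antisymm ((measure_mono hsub2).trans hBc.le) zero_le
    have hkey : ∑ i, ν {f : S → S | f i = j} = 1 := by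
      have h2 : ∀ i, ν {f : S → S | f i = j}
          = ∑ g ∈ Finset.univ.filter (fun g : S → S => g i = j), ν {g} :=
        fun i => measure_setOf_eq_sum ν _
      calc ∑ i, ν {f : S → S | f i = j}
          = ∑ i, ∑ g ∈ Finset.univ.filter (fun g : S → S => g i = j), ν {g} :=
            Finset.sum_congr rfl fun i _ => h2 i
        _ = ∑ g : S → S, ∑ i ∈ Finset.univ.filter (fun i => g i = j), ν {g} := by
            simp_rw [Finset.sum_filter]
            exact Finset.sum_comm
        _ = ∑ g : S → S, (Finset.univ.filter (fun i => g i = j)).card • ν {g} := by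
            simp [Finset.sum_const]
        _ = ∑ g : S → S, ν {g} := by
            refine Finset.sum_congr rfl fun g _ => ?_
            by_cases hg : ν {g} = 0
            · simp [hg]
            · have hs : Function.Surjective g := by
                by_contra hns
                exact hg (hsurj0 g hns)
              have hinj : Function.Injective g := Finite.injective_iff_surjective.2 hs
              obtain ⟨i₀, hi₀⟩ := hs j
              have hcard1 : (Finset.univ.filter (fun i => g i = j)).card = 1 := by
                rw [Finset.card_eq_one]
                refine ⟨i₀, ?_⟩
                ext i
                simp only [Finset.mem_filter, Finset.mem_univ, true_and,
                  Finset.mem_singleton]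
                exact ⟨fun h => hinj (h.trans hi₀.symm), fun h => h ▸ hi₀⟩
              rw [hcard1, one_nsmul]
        _ = ν Set.univ := by
            have h3 := measure_setOf_eq_sum ν (fun _ : S → S => True)
            simp only [Finset.filter_true] at h3
            rw [← h3]
            congr 1
        _ = 1 := measure_univ
    have hofReal : ENNReal.ofReal (∑ i, P i j) = ENNReal.ofReal 1 := by
      rw [ENNReal.ofReal_sum_of_nonneg (fun i _ => hP.1 i j), ENNReal.ofReal_one, ← hkey]
      exact Finset.sum_congr rfl fun i _ => (hcons i j).symm
    exact (ENNReal.ofReal_eq_ofReal_iff (Finset.sum_nonneg fun i _ => hP.1 i j)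
      zero_le_one).1 hofReal
  · intro hcol
    have hds : Matrix.of P ∈ doublyStochastic ℝ S := by
      rw [mem_doublyStochastic_iff_sum]
      exact ⟨hP.1, hP.2, hcol⟩
    obtain ⟨w, hw0, hw1, hwP⟩ := exists_eq_sum_perm_of_mem_doublyStochastic hds
    have hPij : ∀ i j, P i j
        = ∑ σ ∈ Finset.univ.filter (fun σ : Equiv.Perm S => σ i = j), w σ := by
      intro i j
      have h := congrFun (congrFun hwP i) j
      rw [Matrix.sum_apply] at h
      rw [show P i j = Matrix.of P i j from rfl, ← h, Finset.sum_filter]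
      refine Finset.sum_congr rfl fun σ _ => ?_
      simp [Equiv.Perm.permMatrix, PEquiv.toMatrix_apply, Equiv.toPEquiv_apply,
        mul_ite, mul_one, mul_zero, eq_comm]
    set ν : Measure (S → S) := Measure.map (qmap w) volume with hνdef
    have hq : Measurable (qmap w) := measurable_qmap hw0
    haveI hvolprob : IsProbabilityMeasure (volume : Measure (AddCircle (1:ℝ))) :=
      ⟨by simp [AddCircle.measure_univ]⟩
    haveI hνprob : IsProbabilityMeasure ν := Measure.isProbabilityMeasure_map hq.aemeasurable
    have hνsingle : ∀ g : S → S, ν {g} = volume (qmap w ⁻¹' {g}) :=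
      fun g => Measure.map_apply hq (measurableSet_singleton g)
    have hνσ : ∀ σ : Equiv.Perm S, ν {⇑σ} = ENNReal.ofReal (w σ) := fun σ => by
      rw [hνsingle, volume_qmap_perm hw0 hw1]
    have hν0 : ∀ g : S → S, (∀ σ : Equiv.Perm S, ⇑σ ≠ g) → ν {g} = 0 := by
      intro g hg
      rw [hνsingle]
      have h : qmap w ⁻¹' {g} = ∅ := by
        ext y
        simp only [Set.mem_preimage, Set.mem_singleton_iff, Set.mem_empty_iff_false,
          iff_false]
        intro h
        exact hg _ h
      rw [h, measure_empty]
    have hconsistent : Consistent P ν := by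
      intro i j
      rw [measure_setOf_eq_sum ν (fun g : S → S => g i = j)]
      have himg : (Finset.univ.filter (fun σ : Equiv.Perm S => σ i = j)).image
          (fun σ : Equiv.Perm S => ⇑σ)
          ⊆ Finset.univ.filter (fun g : S → S => g i = j) := by
        intro g hg
        simp only [Finset.mem_image, Finset.mem_filter, Finset.mem_univ, true_and] at hg ⊢
        obtain ⟨σ, hσ, rfl⟩ := hg
        exact hσ
      rw [← Finset.sum_subset himg ?hz]
      case hz =>
        intro g hgA hgB
        have hgij : g i = j := (Finset.mem_filter.1 hgA).2
        refine hν0 g fun σ hσ => hgB ?_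
        refine Finset.mem_image.2 ⟨σ, ?_, hσ⟩
        refine Finset.mem_filter.2 ⟨Finset.mem_univ σ, ?_⟩
        rw [show (σ i : S) = g i from congrFun hσ i, hgij]
      rw [Finset.sum_image (fun a _ b _ h => Equiv.coe_fn_injective h)]
      calc ∑ σ ∈ Finset.univ.filter (fun σ : Equiv.Perm S => σ i = j), ν {⇑σ}
          = ∑ σ ∈ Finset.univ.filter (fun σ : Equiv.Perm S => σ i = j),
            ENNReal.ofReal (w σ) := Finset.sum_congr rfl fun σ _ => hνσ σ
        _ = ENNReal.ofReal
            (∑ σ ∈ Finset.univ.filter (fun σ : Equiv.Perm S => σ i = j), w σ) :=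
            (ENNReal.ofReal_sum_of_nonneg fun σ _ => hw0 σ).symm
        _ = ENNReal.ofReal (P i j) := by rw [← hPij i j]
    set Q : (ℕ → AddCircle (1:ℝ)) → ℕ → S → S := fun x s => qmap w (x s) with hQdef
    have hQ : Measurable Q := measurable_pi_lambda _ fun s => hq.comp (measurable_pi_apply s)
    refine ⟨ν, hνprob, hconsistent, Measure.map Q haarG,
      Measure.isProbabilityMeasure_map hQ.aemeasurable, ?_, ?_⟩
    · intro I g
      have hAmeas : MeasurableSet {F : ℕ → S → S | ∀ s ∈ I, F s = g s} := by
        have h : {F : ℕ → S → S | ∀ s ∈ I, F s = g s}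
            = ⋂ s ∈ (I : Set ℕ), (fun F : ℕ → S → S => F s) ⁻¹' {g s} := by
          ext F; simp
        rw [h]
        exact MeasurableSet.biInter I.countable_toSet
          (fun s _ => (measurable_pi_apply s) (measurableSet_singleton (g s)))
      rw [Measure.map_apply hQ hAmeas]
      have hpre : Q ⁻¹' {F : ℕ → S → S | ∀ s ∈ I, F s = g s}
          = {x : ℕ → AddCircle (1:ℝ) | ∀ s ∈ I, x s ∈ qmap w ⁻¹' {g s}} := by
        ext x
        simp [hQdef]
      rw [hpre, haarG_cyl I _ (fun s => hq (measurableSet_singleton (g s)))]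
      exact Finset.prod_congr rfl fun s _ => (hνsingle (g s)).symm
    · have hQall : ∀ x, kF (Q x) = n := by
        intro x
        rw [← hcard, kF_eq_card_iff]
        intro t
        exact ktF_eq_card_of_surj _ t
          (fwd_bijective (Q x) (fun s => qmap_bijective (x s)) t).surjective
      have hmeasn : MeasurableSet {F : ℕ → S → S | kF F = n} := by
        rw [← hcard]
        exact measurableSet_kF_eq_card
      rw [Measure.map_apply hQ hmeasn]
      have h : Q ⁻¹' {F : ℕ → S → S | kF F = n} = Set.univ := by
        ext x
        simp [hQall x]
      rw [h, haarG_univ]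

end CFTP
end
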